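/- If 1 ≤ N ≤ N' ≤ ∞ then DC_{N'} ⊆ DC_N; consequently, if a compact measured length space (X,d,ν) has nonnegative N-Ricci curvature (displacement convexity of U_ν for all U ∈ DC_N along some Wasserstein geodesic), then it has nonnegative N'-Ricci curvature. -/

import Mathlib

open MeasureTheory Set Filter
open scoped ENNReal

section Aux

/-- Slope monotonicity for a convex function vanishing at 0. -/
lemma slope_mono_aux {U : ℝ → ℝ} (hU : ConvexOn ℝ (Set.Ici 0) U) (h0 : U 0 = 0)
    {a b : ℝ} (ha : 0 < a) (hab : a ≤ b) : U a / a ≤ U b / b := by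
  have hb : 0 < b := lt_of_lt_of_le ha hab
  have key : U a ≤ (a / b) * U b := by
    have h1 : (a / b) • b + (1 - a / b) • (0:ℝ) = a := by
      field_simp
      rw [smul_eq_mul, smul_eq_mul, mul_zero, add_zero, div_mul_cancel₀ _ hb.ne']
    have hd1 : (0:ℝ) ≤ a / b := by positivity
    have hd2 : (0:ℝ) ≤ 1 - a / b := by
      rw [sub_nonneg]; exact div_le_one_of_le₀ hab hb.le
    have hd3 : a / b + (1 - a / b) = 1 := by ring
    have h2 := hU.2 (Set.mem_Ici.2 hb.le) (Set.mem_Ici.2 (le_refl (0:ℝ))) hd1 hd2 hd3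
    rw [h1, h0] at h2
    simpa using h2
  rw [div_le_div_iff₀ ha hb]
  calc U a * b ≤ (a / b * U b) * b := by nlinarith
    _ = U b * a := by field_simp

/-- Composition of a convex antitone function with a concave function is convex. -/
lemma convexOn_comp_concaveOn_aux {g f : ℝ → ℝ} {s t : Set ℝ}
    (hg : ConvexOn ℝ t g) (hg' : AntitoneOn g t)
    (hf : ConcaveOn ℝ s f) (hmaps : ∀ x ∈ s, f x ∈ t) :
    ConvexOn ℝ s (fun x => g (f x)) := by
  refine ⟨hf.1, fun x hx y hy a b ha hb hab => ?_⟩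
  have hx' := hmaps x hx
  have hy' := hmaps y hy
  have hmem : a • f x + b • f y ∈ t := hg.1 hx' hy' ha hb hab
  have h1 : f (a • x + b • y) ∈ t := hmaps _ (hf.1 hx hy ha hb hab)
  calc g (f (a • x + b • y)) ≤ g (a • f x + b • f y) :=
        hg' hmem h1 (hf.2 hx hy ha hb hab)
    _ ≤ a • g (f x) + b • g (f y) := hg.2 hx' hy' ha hb hab

end Aux



lemma antitone_fin_aux {U : ℝ → ℝ} (hU : ConvexOn ℝ (Set.Ici 0) U) (h0 : U 0 = 0)
    {p : ℝ} (hp : 0 < p) :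
    AntitoneOn (fun l : ℝ => l ^ p * U (l ^ (-p))) (Set.Ioi 0) := by
  intro x hx y hy hxy
  have hx0 : (0:ℝ) < x := hx
  have hy0 : (0:ℝ) < y := hy
  have huy : (0:ℝ) < y ^ (-p) := Real.rpow_pos_of_pos hy0 _
  have hmono : y ^ (-p) ≤ x ^ (-p) :=
    Real.rpow_le_rpow_of_nonpos hx0 hxy (neg_nonpos.2 hp.le)
  have hfx : x ^ p * U (x ^ (-p)) = U (x ^ (-p)) / (x ^ (-p)) := by
    rw [Real.rpow_neg hx0.le, div_eq_mul_inv, inv_inv, mul_comm]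
  have hfy : y ^ p * U (y ^ (-p)) = U (y ^ (-p)) / (y ^ (-p)) := by
    rw [Real.rpow_neg hy0.le, div_eq_mul_inv, inv_inv, mul_comm]
  simp only [hfx, hfy]
  exact slope_mono_aux hU h0 huy hmono

lemma antitone_inf_aux {U : ℝ → ℝ} (hU : ConvexOn ℝ (Set.Ici 0) U) (h0 : U 0 = 0) :
    Antitone (fun l : ℝ => Real.exp l * U (Real.exp (-l))) := by
  intro x y hxy
  have huy : (0:ℝ) < Real.exp (-y) := Real.exp_pos _
  have hmono : Real.exp (-y) ≤ Real.exp (-x) := Real.exp_le_exp.2 (by linarith)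
  have hfx : Real.exp x * U (Real.exp (-x)) = U (Real.exp (-x)) / (Real.exp (-x)) := by
    rw [Real.exp_neg, div_eq_mul_inv, inv_inv, mul_comm]
  have hfy : Real.exp y * U (Real.exp (-y)) = U (Real.exp (-y)) / (Real.exp (-y)) := by
    rw [Real.exp_neg, div_eq_mul_inv, inv_inv, mul_comm]
  simp only [hfx, hfy]
  exact slope_mono_aux hU h0 huy hmono




open MeasureTheory Set Filter
open scoped ENNReal

variable {X : Type*} [MetricSpace X] [CompactSpace X] [MeasurableSpace X] [BorelSpace X]

/-- A transference plan (coupling) between two measures. -/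
def IsCoupling (π : Measure (X × X)) (μ₀ μ₁ : Measure X) : Prop :=
  π.map Prod.fst = μ₀ ∧ π.map Prod.snd = μ₁

/-- Square of the quadratic Wasserstein distance. -/
noncomputable def W2sq (μ₀ μ₁ : Measure X) : ℝ≥0∞ :=
  ⨅ (π : Measure (X × X)) (_ : IsCoupling π μ₀ μ₁),
    ∫⁻ p, ENNReal.ofReal (dist p.1 p.2 ^ 2) ∂π

/-- The quadratic Wasserstein distance. -/
noncomputable def W2 (μ₀ μ₁ : Measure X) : ℝ :=
  Real.sqrt (W2sq μ₀ μ₁).toReal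


/-- `U'(∞) = lim_{r→∞} U(r)/r` (as a limsup, which equals the limit for convex `U`). -/
noncomputable def UprimeInf (U : ℝ → ℝ) : EReal :=
  Filter.limsup (fun r : ℝ => ((U r / r : ℝ) : EReal)) Filter.atTop

/-- The positive part of an extended real number, as an extended nonnegative real. -/
noncomputable def EReal.posPart' (e : EReal) : ℝ≥0∞ :=
  if e = ⊤ then ⊤ else ENNReal.ofReal e.toReal

/-- The entropy functional `U_ν(μ) = ∫_X U(ρ) dν + U'(∞) μ_s(X)`, where `μ = ρ ν + μ_s`
is the Lebesgue decomposition of `μ` with respect to `ν`.  It takes values in the extended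
reals; for the functionals of interest the value lies in `ℝ ∪ {+∞}`. -/
noncomputable def ent {Z : Type*} [MeasurableSpace Z] (U : ℝ → ℝ) (μ ν : Measure Z) : EReal :=
  ((∫⁻ x, ENNReal.ofReal (U ((μ.rnDeriv ν x).toReal)) ∂ν : ℝ≥0∞) : EReal)
    - ((∫⁻ x, ENNReal.ofReal (-(U ((μ.rnDeriv ν x).toReal))) ∂ν : ℝ≥0∞) : EReal)
    + UprimeInf U * ((μ.singularPart ν Set.univ : ℝ≥0∞) : EReal)

/-- The displacement convexity class `DC_N`, for `N ∈ [1, ∞]`. -/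
def DC (N : ℝ≥0∞) (U : ℝ → ℝ) : Prop :=
  ContinuousOn U (Set.Ici 0) ∧ ConvexOn ℝ (Set.Ici 0) U ∧ U 0 = 0 ∧
    (if N = ∞ then ConvexOn ℝ Set.univ (fun l : ℝ => Real.exp l * U (Real.exp (-l)))
     else ConvexOn ℝ (Set.Ioi 0) (fun l : ℝ => l ^ N.toReal * U (l ^ (-N.toReal))))

/-- A metric space is a (compact) length space iff any two points are joined by a minimizing
constant-speed geodesic. -/
def GeodesicMetricSpace (Y : Type*) [MetricSpace Y] : Prop :=
  ∀ x y : Y, ∃ γ : ℝ → Y, γ 0 = x ∧ γ 1 = y ∧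
    ∀ s ∈ Set.Icc (0:ℝ) 1, ∀ t ∈ Set.Icc (0:ℝ) 1,
      dist (γ s) (γ t) = |s - t| * dist x y

/-- A (constant-speed, minimizing) Wasserstein geodesic from `μ₀` to `μ₁`. -/
def IsW2Geodesic {X : Type*} [MetricSpace X] [CompactSpace X] [MeasurableSpace X] [BorelSpace X]
    (Γ : ℝ → ProbabilityMeasure X) (μ₀ μ₁ : ProbabilityMeasure X) : Prop :=
  Γ 0 = μ₀ ∧ Γ 1 = μ₁ ∧ ∀ s ∈ Set.Icc (0:ℝ) 1, ∀ t ∈ Set.Icc (0:ℝ) 1,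
    W2 (Γ s : Measure X) (Γ t : Measure X) = |s - t| * W2 (μ₀ : Measure X) (μ₁ : Measure X)

/-- The support of a measure on a metric space. -/
def mSupp {X : Type*} [MetricSpace X] [MeasurableSpace X] (ν : Measure X) : Set X :=
  {x | ∀ r > 0, 0 < ν (Metric.ball x r)}

/-- `(X, d, ν)` has nonnegative `N`-Ricci curvature: for any two probability measures
supported in `supp ν` there is some Wasserstein geodesic joining them along which the
entropy `U_ν` is convex, for every `U ∈ DC_N` simultaneously. -/
def NonnegRicci {X : Type*} [MetricSpace X] [CompactSpace X] [MeasurableSpace X] [BorelSpace X]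
    (N : ℝ≥0∞) (ν : Measure X) : Prop :=
  ∀ μ₀ μ₁ : ProbabilityMeasure X,
    (μ₀ : Measure X) (mSupp ν)ᶜ = 0 → (μ₁ : Measure X) (mSupp ν)ᶜ = 0 →
    ∃ Γ : ℝ → ProbabilityMeasure X, IsW2Geodesic Γ μ₀ μ₁ ∧
      ∀ U : ℝ → ℝ, DC N U → ∀ t ∈ Set.Icc (0:ℝ) 1,
        ent U (Γ t : Measure X) ν
          ≤ ((t : ℝ) : EReal) * ent U (μ₁ : Measure X) ν
            + ((1 - t : ℝ) : EReal) * ent U (μ₀ : Measure X) ν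

lemma DC_mono (N N' : ℝ≥0∞) (h1 : 1 ≤ N) (hNN' : N ≤ N')
    (U : ℝ → ℝ) (hU : DC N' U) : DC N U := by
  obtain ⟨hc, hconv, h0, hlast⟩ := hU
  refine ⟨hc, hconv, h0, ?_⟩
  by_cases hNtop : N = ∞
  · have hN't : N' = ∞ := top_le_iff.1 (hNtop ▸ hNN')
    rw [if_pos hNtop]
    rw [if_pos hN't] at hlast
    exact hlast
  · rw [if_neg hNtop]
    have hn1 : 1 ≤ N.toReal := by
      simpa using ENNReal.toReal_mono hNtop h1
    have hnpos : (0:ℝ) < N.toReal := lt_of_lt_of_le one_pos hn1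
    by_cases hN't : N' = ∞
    · rw [if_pos hN't] at hlast
      have hanti : AntitoneOn (fun l : ℝ => Real.exp l * U (Real.exp (-l))) Set.univ :=
        (antitone_inf_aux hconv h0).antitoneOn _
      have hconc : ConcaveOn ℝ (Set.Ioi 0) (fun l : ℝ => N.toReal * Real.log l) := by
        have := (strictConcaveOn_log_Ioi.concaveOn).smul hnpos.le
        simpa [smul_eq_mul] using this
      have hcomp := convexOn_comp_concaveOn_aux hlast hanti hconc
        (fun x _ => Set.mem_univ _)
      refine hcomp.congr ?_
      intro l hl
      have hl0 : (0:ℝ) < l := hl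
      show Real.exp (N.toReal * Real.log l) * U (Real.exp (-(N.toReal * Real.log l)))
          = l ^ N.toReal * U (l ^ (-N.toReal))
      rw [Real.rpow_def_of_pos hl0, Real.rpow_def_of_pos hl0, mul_comm (Real.log l),
        mul_comm (Real.log l), neg_mul]
    · rw [if_neg hN't] at hlast
      have hnn' : N.toReal ≤ N'.toReal := ENNReal.toReal_mono hN't hNN'
      have hn'pos : (0:ℝ) < N'.toReal := lt_of_lt_of_le hnpos hnn'
      set α := N.toReal / N'.toReal with hα
      have hα0 : 0 ≤ α := by positivity
      have hα1 : α ≤ 1 := div_le_one_of_le₀ hnn' hn'pos.le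
      have hconc : ConcaveOn ℝ (Set.Ioi 0) (fun l : ℝ => l ^ α) :=
        (Real.concaveOn_rpow hα0 hα1).subset Set.Ioi_subset_Ici_self (convex_Ioi 0)
      have hanti := antitone_fin_aux hconv h0 hn'pos
      have hcomp := convexOn_comp_concaveOn_aux hlast hanti hconc
        (fun l hl => Real.rpow_pos_of_pos hl _)
      refine hcomp.congr ?_
      intro l hl
      have hl0 : (0:ℝ) < l := hl
      show (l ^ α) ^ N'.toReal * U ((l ^ α) ^ (-N'.toReal))
          = l ^ N.toReal * U (l ^ (-N.toReal))
      rw [← Real.rpow_mul hl0.le, ← Real.rpow_mul hl0.le, hα,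
        div_mul_cancel₀ _ hn'pos.ne', mul_neg, div_mul_cancel₀ _ hn'pos.ne']

/-- If `1 ≤ N ≤ N' ≤ ∞` then `DC_{N'} ⊆ DC_N`; consequently nonnegative `N`-Ricci curvature
implies nonnegative `N'`-Ricci curvature. -/
theorem stmt11 (N N' : ℝ≥0∞) (h1 : 1 ≤ N) (hNN' : N ≤ N') :
    (∀ U : ℝ → ℝ, DC N' U → DC N U) ∧
    (∀ (ν : Measure X), IsProbabilityMeasure ν → GeodesicMetricSpace X →
      NonnegRicci N ν → NonnegRicci N' ν) := by
  refine ⟨DC_mono N N' h1 hNN', ?_⟩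
  intro ν _ _ hR μ₀ μ₁ hs0 hs1
  obtain ⟨Γ, hg, hent⟩ := hR μ₀ μ₁ hs0 hs1
  exact ⟨Γ, hg, fun U hU t ht => hent U (DC_mono N N' h1 hNN' U hU) t ht⟩
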